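/- Only the upper bound of the quasi-orthogonality estimate: if D is a dictionary with cumulative coherence μ₁(D) < ∞, then for any finite set of distinct g¹,…,g^N ∈ D and reals c_ν, ‖Σ c_ν g^ν‖² ≤ (1 + 2μ₁(D)) Σ c_ν². -/

import Mathlib

open RealInnerProductSpace Finset

/-- Upper bound of the quasi-orthogonality estimate: for a set of unit vectors
with cumulative coherence bounded by `μ < ∞`,
`‖Σ c g‖² ≤ (1+2μ)Σc²`. -/
theorem quasi_orthogonality_upper
    {H : Type*} [NormedAddCommGroup H] [InnerProductSpace ℝ H] [CompleteSpace H]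
    (D : Set H) (hDnorm : ∀ g ∈ D, ‖g‖ = 1)
    (hDdense : Dense (↑(Submodule.span ℝ D) : Set H))
    (μ : ℝ)
    (hμ : ∀ g ∈ D, ∀ S : Finset H, ↑S ⊆ D → g ∉ S →
      ∑ h ∈ S, |⟪h, g⟫| ≤ μ)
    (N : ℕ) (g : Fin N → H) (hgD : ∀ ν, g ν ∈ D)
    (hginj : Function.Injective g) (c : Fin N → ℝ) :
    ‖∑ ν, c ν • g ν‖ ^ 2 ≤ (1 + 2 * μ) * ∑ ν, (c ν) ^ 2 := by
  classical
  rcases Nat.eq_zero_or_pos N with h0 | hN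
  · subst h0; simp
  have hμ0 : 0 ≤ μ := by
    have := hμ (g ⟨0, hN⟩) (hgD _) ∅ (by simp) (by simp)
    simpa using this
  -- the coherence bound for each ν
  have hcoh : ∀ ν : Fin N, ∑ μ' ∈ univ.erase ν, |⟪g μ', g ν⟫| ≤ μ := by
    intro ν
    have hsub : ↑((univ.erase ν).image g) ⊆ D := by
      intro x hx
      simp only [coe_image, Set.mem_image] at hx
      obtain ⟨a, _, rfl⟩ := hx
      exact hgD a
    have hnotmem : g ν ∉ (univ.erase ν).image g := by
      simp only [mem_image, not_exists]
      rintro a ⟨ha, hga⟩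
      exact (mem_erase.mp ha).1 (hginj hga)
    have := hμ (g ν) (hgD ν) ((univ.erase ν).image g) hsub hnotmem
    rwa [Finset.sum_image (fun a _ b _ h => hginj h)] at this
  have key : ‖∑ ν, c ν • g ν‖ ^ 2
      = ∑ ν, ∑ μ', c ν * c μ' * ⟪g ν, g μ'⟫ := by
    rw [← real_inner_self_eq_norm_sq, sum_inner]
    refine Finset.sum_congr rfl fun ν _ => ?_
    rw [inner_sum]
    refine Finset.sum_congr rfl fun μ' _ => ?_
    rw [real_inner_smul_left, real_inner_smul_right]; ring
  have hdiag : ∀ ν : Fin N, ⟪g ν, g ν⟫ = 1 := by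
    intro ν
    rw [real_inner_self_eq_norm_sq, hDnorm _ (hgD ν)]; norm_num
  have split : ∀ ν : Fin N,
      ∑ μ', c ν * c μ' * ⟪g ν, g μ'⟫
        = c ν ^ 2 + ∑ μ' ∈ univ.erase ν, c ν * c μ' * ⟪g ν, g μ'⟫ := by
    intro ν
    rw [← Finset.add_sum_erase _ _ (mem_univ ν), hdiag]; ring_nf
  rw [key]
  calc ∑ ν, ∑ μ', c ν * c μ' * ⟪g ν, g μ'⟫
      = ∑ ν, (c ν ^ 2 + ∑ μ' ∈ univ.erase ν, c ν * c μ' * ⟪g ν, g μ'⟫) := by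
        exact Finset.sum_congr rfl fun ν _ => split ν
    _ = (∑ ν, c ν ^ 2) + ∑ ν, ∑ μ' ∈ univ.erase ν, c ν * c μ' * ⟪g ν, g μ'⟫ := by
        rw [Finset.sum_add_distrib]
    _ ≤ (∑ ν, c ν ^ 2) + ∑ ν, ∑ μ' ∈ univ.erase ν,
          (c ν ^ 2 / 2 + c μ' ^ 2 / 2) * |⟪g ν, g μ'⟫| := by
        refine add_le_add (le_refl _) (Finset.sum_le_sum fun ν _ =>
          Finset.sum_le_sum fun μ' _ => ?_)
        calc c ν * c μ' * ⟪g ν, g μ'⟫ ≤ |c ν * c μ' * ⟪g ν, g μ'⟫| := le_abs_self _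
          _ = |c ν| * |c μ'| * |⟪g ν, g μ'⟫| := by rw [abs_mul, abs_mul]
          _ ≤ (c ν ^ 2 / 2 + c μ' ^ 2 / 2) * |⟪g ν, g μ'⟫| := by
              have h2 : |c ν| * |c μ'| ≤ c ν ^ 2 / 2 + c μ' ^ 2 / 2 := by
                nlinarith [sq_nonneg (|c ν| - |c μ'|), sq_abs (c ν), sq_abs (c μ')]
              exact mul_le_mul_of_nonneg_right h2 (abs_nonneg _)
    _ = (∑ ν, c ν ^ 2) + (∑ ν, ∑ μ' ∈ univ.erase ν, c ν ^ 2 / 2 * |⟪g ν, g μ'⟫|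
          + ∑ ν, ∑ μ' ∈ univ.erase ν, c μ' ^ 2 / 2 * |⟪g ν, g μ'⟫|) := by
        simp only [add_mul, Finset.sum_add_distrib]
    _ = (∑ ν, c ν ^ 2) + (∑ ν, ∑ μ' ∈ univ.erase ν, c ν ^ 2 / 2 * |⟪g ν, g μ'⟫|
          + ∑ ν, ∑ μ' ∈ univ.erase ν, c ν ^ 2 / 2 * |⟪g μ', g ν⟫|) := by
        congr 2
        rw [Finset.sum_comm' (s := univ) (t := fun ν => univ.erase ν)
          (t' := univ) (s' := fun ν => univ.erase ν)
          (by intro x y; simp [mem_erase, eq_comm, ne_comm, and_comm])]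
    _ ≤ (∑ ν, c ν ^ 2) + (∑ ν, c ν ^ 2 / 2 * μ + ∑ ν, c ν ^ 2 / 2 * μ) := by
        refine add_le_add (le_refl _) (add_le_add (Finset.sum_le_sum fun ν _ => ?_)
          (Finset.sum_le_sum fun ν _ => ?_))
        · rw [← Finset.mul_sum]
          refine mul_le_mul_of_nonneg_left ?_ (by positivity)
          calc ∑ μ' ∈ univ.erase ν, |⟪g ν, g μ'⟫|
              = ∑ μ' ∈ univ.erase ν, |⟪g μ', g ν⟫| :=
                Finset.sum_congr rfl fun μ' _ => by rw [real_inner_comm]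
            _ ≤ μ := hcoh ν
        · rw [← Finset.mul_sum]
          exact mul_le_mul_of_nonneg_left (hcoh ν) (by positivity)
    _ ≤ (1 + 2 * μ) * ∑ ν, c ν ^ 2 := by
        have hs : ∑ ν : Fin N, c ν ^ 2 / 2 * μ = μ / 2 * ∑ ν, c ν ^ 2 := by
          rw [Finset.mul_sum]; exact Finset.sum_congr rfl fun ν _ => by ring
        rw [hs]
        nlinarith [Finset.sum_nonneg fun ν (_ : ν ∈ univ) => sq_nonneg (c ν)]
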